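/- Let D be an m×n real matrix (coerced into ℍ), let W ∈ ℍ^{n×n} be a unitary quaternion matrix, and let Z ∈ ℍ^{p×n} be a quaternion matrix with orthonormal columns (Zᴴ Z = I_n). Set M = D Wᵀ Zᴴ ∈ ℍ^{m×p}. Then the entrywise real part of M Mᴴ equals the real matrix D Dᵀ: Re(M Mᴴ) = D Dᵀ. -/

import Mathlib

open Matrix
open scoped Quaternion

private theorem quat_re_mul_comm (a b : ℍ[ℝ]) : (a * b).re = (b * a).re := by
  simp only [Quaternion.re_mul]; ring

private theorem quat_re_sum {α : Type*} (s : Finset α) (f : α → ℍ[ℝ]) :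
    (∑ i ∈ s, f i).re = ∑ i ∈ s, (f i).re :=
  map_sum (QuaternionAlgebra.reₗ (-1 : ℝ) 0 (-1)) f s

/-- Let `D` be a real matrix (coerced into `ℍ`), `W` a unitary quaternion matrix,
and `Z` a quaternion matrix with orthonormal columns.  Then for
`M = D Wᵀ Zᴴ` the entrywise real part of `M Mᴴ` equals `D Dᵀ`. -/
theorem re_selfConjTranspose_of_real_transpose_unitary {m n p : ℕ}
    (D : Matrix (Fin m) (Fin n) ℝ) (W : Matrix (Fin n) (Fin n) ℍ[ℝ])
    (Z : Matrix (Fin p) (Fin n) ℍ[ℝ])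
    (hW₁ : Wᴴ * W = 1) (hW₂ : W * Wᴴ = 1) (hZ : Zᴴ * Z = 1) :
    ((D.map (fun x : ℝ => (x : ℍ[ℝ])) * Wᵀ * Zᴴ) *
        (D.map (fun x : ℝ => (x : ℍ[ℝ])) * Wᵀ * Zᴴ)ᴴ).map QuaternionAlgebra.re
      = D * Dᵀ := by
  set D' : Matrix (Fin m) (Fin n) ℍ[ℝ] := D.map (fun x : ℝ => (x : ℍ[ℝ])) with hD'
  have key : (D' * Wᵀ * Zᴴ) * (D' * Wᵀ * Zᴴ)ᴴ = D' * (Wᵀ * (Wᵀ)ᴴ) * D'ᴴ := by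
    rw [conjTranspose_mul, conjTranspose_mul, conjTranspose_conjTranspose]
    calc D' * Wᵀ * Zᴴ * (Z * ((Wᵀ)ᴴ * D'ᴴ))
        = D' * Wᵀ * ((Zᴴ * Z) * ((Wᵀ)ᴴ * D'ᴴ)) := by
          simp only [Matrix.mul_assoc]
      _ = D' * (Wᵀ * (Wᵀ)ᴴ) * D'ᴴ := by
          rw [hZ, Matrix.one_mul]
          simp only [Matrix.mul_assoc]
  rw [key]
  -- the key entrywise fact about the transpose of a unitary matrix
  have hX : ∀ k l, ((Wᵀ * (Wᵀ)ᴴ) k l).re = (1 : Matrix (Fin n) (Fin n) ℝ) l k := by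
    intro k l
    have h1 : ((Wᴴ * W) l k).re = (1 : Matrix (Fin n) (Fin n) ℝ) l k := by
      rw [hW₁]
      by_cases h : l = k <;> simp [Matrix.one_apply, h]
    rw [← h1]
    simp only [Matrix.mul_apply, transpose_apply, conjTranspose_apply]
    rw [quat_re_sum, quat_re_sum]
    exact Finset.sum_congr rfl fun s _ => quat_re_mul_comm _ _
  generalize hG : Wᵀ * (Wᵀ)ᴴ = X at hX ⊢
  ext i j
  simp only [Matrix.map_apply, Matrix.mul_apply, transpose_apply]
  have expand : ∀ l : Fin n,
      ((∑ k : Fin n, D' i k * X k l) * D'ᴴ l j).re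
        = ∑ k : Fin n, D i k * D j l * (X k l).re := by
    intro l
    rw [Finset.sum_mul, quat_re_sum]
    refine Finset.sum_congr rfl fun k _ => ?_
    have h2 : D' i k * X k l * D'ᴴ l j
        = ((D i k * D j l : ℝ) : ℍ[ℝ]) * X k l := by
      simp only [hD', Matrix.map_apply, conjTranspose_apply]
      rw [Quaternion.star_coe, Quaternion.coe_mul, mul_assoc, mul_assoc,
        ← Quaternion.coe_commutes]
    rw [h2, Quaternion.coe_mul_eq_smul, Quaternion.re_smul, smul_eq_mul]
  calc (∑ l : Fin n, (∑ k : Fin n, D' i k * X k l) * D'ᴴ l j).re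
      = ∑ l : Fin n, ((∑ k : Fin n, D' i k * X k l) * D'ᴴ l j).re := quat_re_sum _ _
    _ = ∑ l : Fin n, ∑ k : Fin n, D i k * D j l * (X k l).re := by
        exact Finset.sum_congr rfl fun l _ => expand l
    _ = ∑ l : Fin n, ∑ k : Fin n, D i k * D j l * (1 : Matrix (Fin n) (Fin n) ℝ) l k := by
        simp only [hX]
    _ = ∑ k : Fin n, D i k * D j k := by
        rw [Finset.sum_comm]
        refine Finset.sum_congr rfl fun k _ => ?_
        simp [Matrix.one_apply, Finset.sum_ite_eq, mul_ite]
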